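/- (Theorem 1, distribution shift.) Let Φ_x, Φ_u be block lower triangular satisfying (I − Z𝒜̂)Φ_x − Zℬ̂Φ_u = I, Φ = [Φ_x; Φ_u], ΔA = Â − A, ΔB = B̂ − B, Δℳ = [blkdiag_{T+1}(ΔA) blkdiag_{T+1}(ΔB)], R_Φ = (I + ΦZΔℳ)⁻¹. Fix x₀ ∈ ℝ^n and let P_w be a probability measure on ℝ^{(T+1)n} with finite first moment, supported on { w : first n coordinates of w equal x₀ }. Given data (x^i, u^i), i = 1,…,N, define w^i = x^i − Z blkdiag_{T+1}(A) x^i − Z blkdiag_{T+1}(B) u^i and ŵ^i = x^i − Z𝒜̂x^i − Zℬ̂u^i, and assume the first n coordinates of each w^i equal x₀. Let P̂_pred = (1/N)Σ_i δ_{Φŵ^i} (empirical predictive distribution), P̄_w = (1/N)Σ_i δ_{w^i} (empirical disturbance distribution), and P_cl = (R_ΦΦ)#P_w (true closed-loop distribution). Then d_W(P̂_pred, P_cl) ≤ (1/N)Σ_{i=1}^N ‖R_Φ Φ Z Δℳ (Φŵ^i − [x^i; u^i])‖ + ‖R_Φ Φ Z‖ · d_W(P̄_w, P_w). -/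

import Mathlib

open MeasureTheory Matrix
open scoped ENNReal

/-- The ℓ¹-norm of a vector. -/
noncomputable def l1norm {ι : Type*} [Fintype ι] (v : ι → ℝ) : ℝ := ∑ i, |v i|

/-- The induced ℓ¹-norm of a matrix (maximum absolute column sum). -/
noncomputable def matL1 {ι κ : Type*} [Fintype ι] [Fintype κ] (M : Matrix ι κ ℝ) : ℝ :=
  ⨆ j, ∑ i, |M i j|

/-- The Wasserstein-1 distance (w.r.t. the ℓ¹-norm): infimum over couplings of the expected
ℓ¹-distance. -/
noncomputable def wass {ι : Type*} [Fintype ι] (P Q : Measure (ι → ℝ)) : ℝ :=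
  sInf { r | ∃ π : Measure ((ι → ℝ) × (ι → ℝ)),
    IsProbabilityMeasure π ∧ π.map Prod.fst = P ∧ π.map Prod.snd = Q ∧
    r = ∫ p, l1norm (p.1 - p.2) ∂π }

/-- The uniform empirical measure `(1/N) ∑ᵢ δ_{a i}`. -/
noncomputable def emp {ι : Type*} [Fintype ι] {N : ℕ} (a : Fin N → (ι → ℝ)) :
    Measure (ι → ℝ) :=
  (N : ℝ≥0∞)⁻¹ • ∑ i, Measure.dirac (a i)

/-- The block-downshift matrix `Z`, with `n × n` identity blocks on the first block
subdiagonal and zero blocks elsewhere. -/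
noncomputable def dshift (T n : ℕ) : Matrix (Fin (T+1) × Fin n) (Fin (T+1) × Fin n) ℝ :=
  fun p q => if (p.1 : ℕ) = (q.1 : ℕ) + 1 ∧ p.2 = q.2 then 1 else 0

/-- `blkdiag T M`: block-diagonal matrix with `T+1` copies of `M` on the diagonal. -/
noncomputable def blkdiag (T : ℕ) {n m : ℕ} (M : Matrix (Fin n) (Fin m) ℝ) :
    Matrix (Fin (T+1) × Fin n) (Fin (T+1) × Fin m) ℝ :=
  fun p q => if p.1 = q.1 then M p.2 q.2 else 0

/-- A block-partitioned matrix is block lower triangular: all blocks strictly above the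
block diagonal are zero. -/
def BlockLT {T n m : ℕ} (M : Matrix (Fin (T+1) × Fin m) (Fin (T+1) × Fin n) ℝ) : Prop :=
  ∀ p q, p.1 < q.1 → M p q = 0

set_option linter.unusedSectionVars false

lemma l1norm_nonneg {ι : Type*} [Fintype ι] (v : ι → ℝ) : 0 ≤ l1norm v :=
  Finset.sum_nonneg fun _ _ => abs_nonneg _

lemma l1norm_add_le {ι : Type*} [Fintype ι] (v u : ι → ℝ) :
    l1norm (v + u) ≤ l1norm v + l1norm u := by
  rw [l1norm, l1norm, l1norm, ← Finset.sum_add_distrib]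
  exact Finset.sum_le_sum fun i _ => abs_add_le _ _

lemma col_sum_le_matL1 {ι κ : Type*} [Fintype ι] [Fintype κ] (M : Matrix ι κ ℝ) (j : κ) :
    ∑ i, |M i j| ≤ matL1 M :=
  le_ciSup (f := fun j => ∑ i, |M i j|) (Set.Finite.bddAbove (Set.finite_range _)) j

lemma matL1_nonneg {ι κ : Type*} [Fintype ι] [Fintype κ] [Nonempty κ] (M : Matrix ι κ ℝ) :
    0 ≤ matL1 M :=
  le_trans (Finset.sum_nonneg fun _ _ => abs_nonneg _) (col_sum_le_matL1 M (Classical.arbitrary κ))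

lemma l1norm_mulVec_le {ι κ : Type*} [Fintype ι] [Fintype κ] (M : Matrix ι κ ℝ) (v : κ → ℝ) :
    l1norm (M *ᵥ v) ≤ matL1 M * l1norm v := by
  have h1 : l1norm (M *ᵥ v) ≤ ∑ j, matL1 M * |v j| := by
    rw [l1norm]
    calc ∑ i, |(M *ᵥ v) i| ≤ ∑ i, ∑ j, |M i j| * |v j| := by
          refine Finset.sum_le_sum fun i _ => ?_
          refine le_trans (Finset.abs_sum_le_sum_abs _ _) ?_
          exact le_of_eq (Finset.sum_congr rfl fun j _ => abs_mul _ _)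
      _ = ∑ j, (∑ i, |M i j|) * |v j| := by
          rw [Finset.sum_comm]; simp [Finset.sum_mul]
      _ ≤ ∑ j, matL1 M * |v j| :=
          Finset.sum_le_sum fun j _ => mul_le_mul_of_nonneg_right (col_sum_le_matL1 M j) (abs_nonneg _)
  simpa [l1norm, Finset.mul_sum] using h1

lemma dshift_mulVec_shift {T n : ℕ} (v : (Fin (T+1) × Fin n) → ℝ) (hv : ∀ j, v (0, j) = 0) :
    dshift T n *ᵥ (fun p => v (p.1 + 1, p.2)) = v := by
  funext p
  obtain ⟨t, j⟩ := p
  show ∑ q : Fin (T+1) × Fin n, (if (t : ℕ) = (q.1 : ℕ) + 1 ∧ j = q.2 then (1:ℝ) else 0) * v (q.1 + 1, q.2) = v (t, j)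
  rcases Nat.eq_zero_or_pos (t : ℕ) with h0 | hpos
  · rw [Finset.sum_eq_zero]
    · have ht : t = 0 := Fin.ext h0
      rw [ht]; exact (hv j).symm
    · intro q _
      rw [if_neg, zero_mul]
      rintro ⟨h1, -⟩; omega
  · have hs : (t : ℕ) - 1 < T + 1 := by omega
    rw [Finset.sum_eq_single (⟨(t:ℕ)-1, hs⟩, j)]
    · rw [if_pos ⟨by simp; omega, rfl⟩, one_mul]
      congr 1
      refine Prod.ext (Fin.ext ?_) rfl
      have ht := t.isLt
      simp only [Fin.val_add, Fin.val_one', Fin.val_mk]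
      have hT1 : 1 % (T+1) = 1 := Nat.mod_eq_of_lt (by omega)
      rw [hT1]
      have h2 : (t:ℕ) - 1 + 1 = (t:ℕ) := by omega
      rw [h2, Nat.mod_eq_of_lt ht]
    · intro q _ hq
      rw [if_neg, zero_mul]
      rintro ⟨h1, h2⟩
      apply hq
      refine Prod.ext (Fin.ext ?_) h2.symm
      simp; omega
    · intro h; exact absurd (Finset.mem_univ _) h

lemma l1norm_shift {T n : ℕ} (v : (Fin (T+1) × Fin n) → ℝ) :
    l1norm (fun p : Fin (T+1) × Fin n => v (p.1 + 1, p.2)) = l1norm v := by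
  rw [l1norm, l1norm]
  exact Equiv.sum_comp ((Equiv.addRight (1 : Fin (T+1))).prodCongr (Equiv.refl (Fin n)))
    (fun p => |v p|)

lemma l1norm_mulVec_dshift_le {T n : ℕ} {ι : Type*} [Fintype ι]
    (M : Matrix ι (Fin (T+1) × Fin n) ℝ) (v : (Fin (T+1) × Fin n) → ℝ)
    (hv : ∀ j, v (0, j) = 0) :
    l1norm (M *ᵥ v) ≤ matL1 (M * dshift T n) * l1norm v := by
  have h1 : M *ᵥ v = (M * dshift T n) *ᵥ (fun p => v (p.1 + 1, p.2)) := by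
    rw [← Matrix.mulVec_mulVec, dshift_mulVec_shift v hv]
  rw [h1, ← l1norm_shift v]
  exact l1norm_mulVec_le _ _


section Meas
variable {ι κ : Type*} [Fintype ι] [Fintype κ]

lemma continuous_l1norm : Continuous (l1norm (ι := ι)) := by
  refine continuous_finset_sum _ fun i _ => ?_
  exact (continuous_apply i).abs

lemma continuous_mulVecFn (G : Matrix κ ι ℝ) : Continuous (fun v : ι → ℝ => G *ᵥ v) := by
  refine continuous_pi fun j => ?_
  refine continuous_finset_sum _ fun i _ => ?_
  exact continuous_const.mul (continuous_apply i)

lemma measurable_mulVecFn (G : Matrix κ ι ℝ) : Measurable (fun v : ι → ℝ => G *ᵥ v) :=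
  (continuous_mulVecFn G).measurable

lemma continuous_cost : Continuous (fun p : (ι → ℝ) × (ι → ℝ) => l1norm (p.1 - p.2)) :=
  continuous_l1norm.comp (continuous_fst.sub continuous_snd)

lemma integrable_dirac' {α : Type*} [MeasurableSpace α] {f : α → ℝ} (hf : Measurable f)
    (a : α) : Integrable f (Measure.dirac a) := by
  refine ⟨hf.aestronglyMeasurable, ?_⟩
  rw [HasFiniteIntegral]
  rw [lintegral_dirac' a (by exact hf.enorm)]
  exact ENNReal.coe_lt_top

lemma integrable_emp {N : ℕ} (hN : 0 < N) (a : Fin N → (ι → ℝ)) {f : (ι → ℝ) → ℝ} (hf : Measurable f) :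
    Integrable f (emp a) := by
  rw [emp]
  refine Integrable.smul_measure ?_ (by simp [hN.ne'])
  exact integrable_finset_sum_measure.2 fun i _ => integrable_dirac' hf (a i)

lemma emp_isProb {N : ℕ} (hN : 0 < N) (a : Fin N → (ι → ℝ)) :
    IsProbabilityMeasure (emp a) := by
  constructor
  rw [emp, Measure.smul_apply, Measure.finset_sum_apply]
  simp only [measure_univ]
  rw [Finset.sum_const, Finset.card_univ, Fintype.card_fin, nsmul_eq_mul, mul_one, smul_eq_mul]
  rw [ENNReal.inv_mul_cancel (by exact_mod_cast hN.ne') (by simp)]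

lemma emp_singleton {N : ℕ} (a : Fin N → (ι → ℝ)) (v : ι → ℝ) :
    emp a {v} = (N : ℝ≥0∞)⁻¹ * (Finset.univ.filter fun j => a j = v).card := by
  rw [emp, Measure.smul_apply, Measure.finset_sum_apply, smul_eq_mul]
  congr 1
  rw [Finset.card_filter]
  push_cast
  refine Finset.sum_congr rfl fun j _ => ?_
  rw [Measure.dirac_apply]
  by_cases h : a j = v <;> simp [h, Set.indicator]

end Meas

lemma l1norm_neg {ι : Type*} [Fintype ι] (v : ι → ℝ) : l1norm (-v) = l1norm v := by
  unfold l1norm; simp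




lemma l1norm_sub_le {ι : Type*} [Fintype ι] (v u : ι → ℝ) :
    l1norm (v - u) ≤ l1norm v + l1norm u := by
  rw [sub_eq_add_neg]
  simpa [l1norm_neg] using l1norm_add_le v (-u)

section Main
variable {ι κ : Type*} [Fintype ι] [Fintype κ] [Nonempty ι]

lemma wass_bound (G : Matrix κ ι ℝ) {N : ℕ} (hN : 0 < N)
    (Pw : Measure (ι → ℝ)) [IsProbabilityMeasure Pw]
    (hPwmom : Integrable (fun v => l1norm v) Pw)
    (w : Fin N → ι → ℝ) (b : Fin N → κ → ℝ) (e : Fin N → ℝ) (c : ℝ) (hc : 0 ≤ c)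
    (hkey : ∀ i, ∀ᵐ y ∂Pw, l1norm (b i - G *ᵥ y) ≤ e i + c * l1norm (w i - y)) :
    wass (emp b) (Pw.map (fun v => G *ᵥ v)) ≤ (N:ℝ)⁻¹ * ∑ i, e i + c * wass (emp w) Pw := by
  classical
  set gm : (ι → ℝ) → (κ → ℝ) := fun v => G *ᵥ v with hgm
  have hgmm : Measurable gm := measurable_mulVecFn G
  set S : Set ℝ := { r | ∃ π : Measure ((ι → ℝ) × (ι → ℝ)),
    IsProbabilityMeasure π ∧ π.map Prod.fst = emp w ∧ π.map Prod.snd = Pw ∧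
    r = ∫ p, l1norm (p.1 - p.2) ∂π } with hS
  have hww : wass (emp w) Pw = sInf S := rfl
  have hSnonneg : ∀ r ∈ S, 0 ≤ r := by
    rintro r ⟨π, hπ, -, -, rfl⟩
    exact integral_nonneg fun p => l1norm_nonneg _
  have hSne : S.Nonempty := by
    haveI := emp_isProb hN w
    refine ⟨_, (emp w).prod Pw, inferInstance, ?_, ?_, rfl⟩
    · rw [Measure.map_fst_prod]; simp
    · rw [Measure.map_snd_prod]; simp
  -- KEY step
  have key : ∀ r ∈ S, wass (emp b) (Pw.map gm) ≤ (N:ℝ)⁻¹ * ∑ i, e i + c * r := by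
    rintro r ⟨π, hπprob, hfst, hsnd, rfl⟩
    have hl1m : Measurable (l1norm (ι := ι)) := continuous_l1norm.measurable
    set cnt : (ι → ℝ) → ℕ := fun a => (Finset.univ.filter fun j => w j = a).card with hcnt
    have hcntpos : ∀ i, 0 < cnt (w i) := fun i =>
      Finset.card_pos.2 ⟨i, by simp [hcnt]⟩
    have hcnt0 : ∀ i, (cnt (w i) : ℝ≥0∞) ≠ 0 := fun i => by
      exact_mod_cast (hcntpos i).ne'
    have hcntt : ∀ i, (cnt (w i) : ℝ≥0∞) ≠ ⊤ := fun i => ENNReal.natCast_ne_top _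
    set Ai : Fin N → Set ((ι → ℝ) × (ι → ℝ)) := fun i => {p | p.1 = w i} with hAi
    have hAieq : ∀ i, Ai i = Prod.fst ⁻¹' {w i} := fun i => rfl
    have hAimeas : ∀ i, MeasurableSet (Ai i) :=
      fun i => measurable_fst (measurableSet_singleton (w i))
    set σ : Fin N → Measure (ι → ℝ) := fun i => (π.restrict (Ai i)).map Prod.snd with hσ
    have hσle : ∀ i, σ i ≤ Pw := by
      intro i
      rw [hσ, ← hsnd]
      exact Measure.map_mono Measure.restrict_le_self measurable_snd
    have hσuniv : ∀ i, σ i Set.univ = (N : ℝ≥0∞)⁻¹ * cnt (w i) := by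
      intro i
      rw [hσ]
      rw [Measure.map_apply measurable_snd MeasurableSet.univ, Set.preimage_univ,
        Measure.restrict_apply_univ, hAieq,
        ← Measure.map_apply measurable_fst (measurableSet_singleton (w i)), hfst,
        emp_singleton]
    haveI hσfin : ∀ i, IsFiniteMeasure (σ i) := by
      intro i
      refine ⟨?_⟩
      rw [hσuniv i]
      exact ENNReal.mul_lt_top (ENNReal.inv_lt_top.2 (by exact_mod_cast hN)) (ENNReal.natCast_lt_top _)
    set σ' : Fin N → Measure (κ → ℝ) := fun i => (σ i).map gm with hσ'
    have hσ'univ : ∀ i, σ' i Set.univ = σ i Set.univ := by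
      intro i
      rw [hσ', Measure.map_apply hgmm MeasurableSet.univ, Set.preimage_univ]
    haveI hσ'fin : ∀ i, IsFiniteMeasure (σ' i) := by
      intro i
      refine ⟨?_⟩
      rw [hσ'univ i, hσuniv i]
      exact ENNReal.mul_lt_top (ENNReal.inv_lt_top.2 (by exact_mod_cast hN)) (ENNReal.natCast_lt_top _)
    set pt : Measure ((κ → ℝ) × (κ → ℝ)) :=
      ∑ i, ((cnt (w i) : ℝ≥0∞))⁻¹ • ((Measure.dirac (b i)).prod (σ' i)) with hpt
    -- first marginal
    have hptfst : pt.map Prod.fst = emp b := by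
      ext s hs
      rw [Measure.map_apply measurable_fst hs, hpt, Measure.finset_sum_apply]
      rw [emp, Measure.smul_apply, Measure.finset_sum_apply, smul_eq_mul, Finset.mul_sum]
      refine Finset.sum_congr rfl fun i _ => ?_
      rw [Measure.smul_apply, smul_eq_mul]
      have hpre : (Prod.fst ⁻¹' s : Set ((κ → ℝ) × (κ → ℝ))) = s ×ˢ Set.univ := by
        ext p; simp
      rw [hpre, Measure.prod_prod, hσ'univ i, hσuniv i]
      calc ((cnt (w i) : ℝ≥0∞))⁻¹ * (Measure.dirac (b i) s * ((N : ℝ≥0∞)⁻¹ * cnt (w i)))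
          = (((cnt (w i) : ℝ≥0∞))⁻¹ * cnt (w i)) * ((N : ℝ≥0∞)⁻¹ * Measure.dirac (b i) s) := by
            ring
        _ = (N : ℝ≥0∞)⁻¹ * Measure.dirac (b i) s := by
            rw [ENNReal.inv_mul_cancel (hcnt0 i) (hcntt i), one_mul]
    -- decomposition of π
    have hsum_decomp : ∀ B : Set ((ι → ℝ) × (ι → ℝ)), MeasurableSet B →
        ∑ i, ((cnt (w i) : ℝ≥0∞))⁻¹ * π (B ∩ Ai i) ≤ π B ∧
        π B ≤ ∑ i, ((cnt (w i) : ℝ≥0∞))⁻¹ * π (B ∩ Ai i) := by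
      intro B hB
      have himg : ∀ a ∈ Finset.univ.image w, cnt a ≠ 0 := by
        intro a ha
        obtain ⟨i, -, rfl⟩ := Finset.mem_image.1 ha
        exact (hcntpos i).ne'
      have h1 : ∑ i, ((cnt (w i) : ℝ≥0∞))⁻¹ * π (B ∩ Ai i)
          = ∑ a ∈ Finset.univ.image w, π (B ∩ {p | p.1 = a}) := by
        rw [Finset.sum_comp (fun a => ((cnt a : ℝ≥0∞))⁻¹ * π (B ∩ {p | p.1 = a})) w]
        refine Finset.sum_congr rfl fun a ha => ?_
        rw [nsmul_eq_mul, ← mul_assoc]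
        rw [ENNReal.mul_inv_cancel (by exact_mod_cast himg a ha) (ENNReal.natCast_ne_top _), one_mul]
      have h2 : ∑ a ∈ Finset.univ.image w, π (B ∩ {p | p.1 = a})
          = π (⋃ a ∈ Finset.univ.image w, B ∩ {p | p.1 = a}) := by
        rw [measure_biUnion_finset]
        · intro a ha a' ha' haa'
          simp only [Function.onFun]
          refine Set.disjoint_left.2 fun p hp hp' => ?_
          exact haa' (hp.2.symm.trans hp'.2)
        · intro a ha
          exact hB.inter (measurable_fst (measurableSet_singleton a))
      have hUsub : (⋃ a ∈ Finset.univ.image w, B ∩ {p | p.1 = a}) ⊆ B := by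
        intro p hp
        simp only [Set.mem_iUnion] at hp
        obtain ⟨a, -, hp, -⟩ := hp
        exact hp
      have hBsub : π B ≤ π (⋃ a ∈ Finset.univ.image w, B ∩ {p | p.1 = a}) := by
        have hnull : π {p : (ι → ℝ) × (ι → ℝ) | p.1 ∉ Finset.univ.image w} = 0 := by
          have hmeas : MeasurableSet {v : ι → ℝ | v ∈ Finset.univ.image w} :=
            (Finset.univ.image w).finite_toSet.measurableSet
          have : {p : (ι → ℝ) × (ι → ℝ) | p.1 ∉ Finset.univ.image w}
              = Prod.fst ⁻¹' {v : ι → ℝ | v ∈ Finset.univ.image w}ᶜ := rfl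
          rw [this, ← Measure.map_apply measurable_fst hmeas.compl, hfst]
          rw [emp, Measure.smul_apply, Measure.finset_sum_apply, smul_eq_mul]
          have : ∀ i ∈ Finset.univ, Measure.dirac (w i) ({v : ι → ℝ | v ∈ Finset.univ.image w}ᶜ) = 0 := by
            intro i _
            rw [Measure.dirac_apply]
            simp only [Set.indicator_apply]
            rw [if_neg]
            simp only [Set.mem_compl_iff, Set.mem_setOf_eq, not_not]
            exact Finset.mem_image_of_mem w (Finset.mem_univ i)
          rw [Finset.sum_congr rfl this]
          simp
        have hsplit : B ⊆ (⋃ a ∈ Finset.univ.image w, B ∩ {p | p.1 = a}) ∪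
            {p : (ι → ℝ) × (ι → ℝ) | p.1 ∉ Finset.univ.image w} := by
          intro p hp
          by_cases hmem : p.1 ∈ Finset.univ.image w
          · left
            simp only [Set.mem_iUnion]
            exact ⟨p.1, hmem, hp, rfl⟩
          · right; exact hmem
        calc π B ≤ π ((⋃ a ∈ Finset.univ.image w, B ∩ {p | p.1 = a}) ∪
              {p : (ι → ℝ) × (ι → ℝ) | p.1 ∉ Finset.univ.image w}) := measure_mono hsplit
          _ ≤ π (⋃ a ∈ Finset.univ.image w, B ∩ {p | p.1 = a}) +
              π {p : (ι → ℝ) × (ι → ℝ) | p.1 ∉ Finset.univ.image w} := measure_union_le _ _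
          _ = π (⋃ a ∈ Finset.univ.image w, B ∩ {p | p.1 = a}) := by rw [hnull, add_zero]
      constructor
      · rw [h1, h2]; exact measure_mono hUsub
      · rw [h1, h2]; exact hBsub
    have hdecomp : ∀ B : Set ((ι → ℝ) × (ι → ℝ)), MeasurableSet B →
        ∑ i, ((cnt (w i) : ℝ≥0∞))⁻¹ * π (B ∩ Ai i) = π B :=
      fun B hB => le_antisymm ((hsum_decomp B hB).1) ((hsum_decomp B hB).2)
    -- second marginal
    have hptsnd : pt.map Prod.snd = Pw.map gm := by
      ext s hs
      rw [Measure.map_apply measurable_snd hs, hpt, Measure.finset_sum_apply]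
      have hstep : ∀ i, (((cnt (w i) : ℝ≥0∞))⁻¹ • ((Measure.dirac (b i)).prod (σ' i)))
          (Prod.snd ⁻¹' s) = ((cnt (w i) : ℝ≥0∞))⁻¹ * π ((Prod.snd ⁻¹' (gm ⁻¹' s)) ∩ Ai i) := by
        intro i
        rw [Measure.smul_apply, smul_eq_mul]
        congr 1
        have hpre : (Prod.snd ⁻¹' s : Set ((κ → ℝ) × (κ → ℝ))) = Set.univ ×ˢ s := by
          ext p; simp
        rw [hpre, Measure.prod_prod]
        have hdone : Measure.dirac (b i) Set.univ = 1 := by simp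
        rw [hdone, one_mul, hσ', Measure.map_apply hgmm hs, hσ,
          Measure.map_apply measurable_snd (hgmm hs),
          Measure.restrict_apply (measurable_snd (hgmm hs))]
      rw [Finset.sum_congr rfl (fun i _ => hstep i)]
      rw [hdecomp _ (measurable_snd (hgmm hs))]
      rw [← Measure.map_apply measurable_snd (hgmm hs), hsnd, ← Measure.map_apply hgmm hs]
    haveI hptprob : IsProbabilityMeasure pt := by
      constructor
      have h0 : pt Set.univ = (pt.map Prod.fst) Set.univ := by
        rw [Measure.map_apply measurable_fst MeasurableSet.univ, Set.preimage_univ]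
      rw [h0, hptfst]
      haveI := emp_isProb hN b
      exact measure_univ
    -- cost bounds
    have hkeyσ : ∀ i, ∀ᵐ y ∂(σ i), l1norm (b i - G *ᵥ y) ≤ e i + c * l1norm (w i - y) :=
      fun i => (hkey i).filter_mono (MeasureTheory.ae_mono (hσle i))
    have hInt_l1_σ : ∀ i, Integrable (fun y => l1norm y) (σ i) :=
      fun i => hPwmom.mono_measure (hσle i)
    have hInt_wy : ∀ i, Integrable (fun y => l1norm (w i - y)) (σ i) := by
      intro i
      have hint : Integrable (fun y : ι → ℝ => l1norm (w i) + l1norm y) (σ i) :=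
        (integrable_const _).add (hInt_l1_σ i)
      refine hint.mono ?_ (Filter.Eventually.of_forall fun y => ?_)
      · exact (continuous_l1norm.comp (continuous_const.sub continuous_id)).aestronglyMeasurable
      · rw [Real.norm_eq_abs, abs_of_nonneg (l1norm_nonneg _)]
        refine le_trans (l1norm_sub_le _ _) (le_abs_self _)
    have hJint : ∀ i, Integrable (fun y => l1norm (b i - G *ᵥ y)) (σ i) := by
      intro i
      have hint : Integrable (fun y : ι → ℝ => l1norm (b i) + matL1 G * l1norm y) (σ i) :=
        (integrable_const _).add ((hInt_l1_σ i).const_mul _)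
      refine hint.mono ?_ (Filter.Eventually.of_forall fun y => ?_)
      · exact (continuous_l1norm.comp
          (continuous_const.sub (continuous_mulVecFn G))).aestronglyMeasurable
      · rw [Real.norm_eq_abs, abs_of_nonneg (l1norm_nonneg _)]
        refine le_trans (l1norm_sub_le _ _) (le_trans ?_ (le_abs_self _))
        exact add_le_add_right (l1norm_mulVec_le G y) _
    -- integral over pt
    have hcost_meas : Continuous (fun p : (κ → ℝ) × (κ → ℝ) => l1norm (p.1 - p.2)) :=
      continuous_l1norm.comp (continuous_fst.sub continuous_snd)
    have hcomp_int : ∀ i, Integrable (fun p : (κ → ℝ) × (κ → ℝ) => l1norm (p.1 - p.2))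
        ((Measure.dirac (b i)).prod (σ' i)) := by
      intro i
      rw [Measure.dirac_prod]
      rw [integrable_map_measure hcost_meas.aestronglyMeasurable measurable_prodMk_left.aemeasurable]
      show Integrable (fun y : κ → ℝ => l1norm (b i - y)) ((σ i).map gm)
      have hc1 : Continuous fun y : κ → ℝ => l1norm (b i - y) :=
        continuous_l1norm.comp (continuous_const.sub continuous_id)
      refine (integrable_map_measure hc1.aestronglyMeasurable hgmm.aemeasurable).2 ?_
      exact hJint i
    have hIpt : ∫ p, l1norm (p.1 - p.2) ∂pt
        = ∑ i, ((cnt (w i) : ℝ≥0∞))⁻¹.toReal * ∫ y, l1norm (b i - G *ᵥ y) ∂(σ i) := by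
      rw [hpt, integral_finset_sum_measure (fun i _ => (hcomp_int i).smul_measure
        (ENNReal.inv_ne_top.2 (hcnt0 i)))]
      refine Finset.sum_congr rfl fun i _ => ?_
      rw [integral_smul_measure, smul_eq_mul]
      congr 1
      rw [Measure.dirac_prod,
        integral_map measurable_prodMk_left.aemeasurable hcost_meas.aestronglyMeasurable]
      show ∫ y, l1norm (b i - y) ∂((σ i).map gm) = _
      have hc1 : Continuous fun y : κ → ℝ => l1norm (b i - y) :=
        continuous_l1norm.comp (continuous_const.sub continuous_id)
      rw [integral_map hgmm.aemeasurable hc1.aestronglyMeasurable]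
    have hmass : ∀ i, ((σ i) Set.univ).toReal = (N : ℝ)⁻¹ * cnt (w i) := by
      intro i
      rw [hσuniv i, ENNReal.toReal_mul, ENNReal.toReal_inv]
      simp
    have hIb : ∀ i, ∫ y, l1norm (b i - G *ᵥ y) ∂(σ i)
        ≤ e i * ((N : ℝ)⁻¹ * cnt (w i)) + c * ∫ y, l1norm (w i - y) ∂(σ i) := by
      intro i
      have h1 : ∫ y, l1norm (b i - G *ᵥ y) ∂(σ i)
          ≤ ∫ y, (e i + c * l1norm (w i - y)) ∂(σ i) :=
        integral_mono_of_nonneg (Filter.Eventually.of_forall fun y => l1norm_nonneg _)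
          ((integrable_const _).add ((hInt_wy i).const_mul c)) (hkeyσ i)
      refine le_trans h1 (le_of_eq ?_)
      rw [integral_add (integrable_const _) ((hInt_wy i).const_mul c), integral_const,
        integral_const_mul, measureReal_def, hmass i, smul_eq_mul]
      ring
    -- set-integral form of the inner integrals
    have hIi : ∀ i, ∫ y, l1norm (w i - y) ∂(σ i) = ∫ p in Ai i, l1norm (p.1 - p.2) ∂π := by
      intro i
      have hc2 : Continuous fun y : ι → ℝ => l1norm (w i - y) :=
        continuous_l1norm.comp (continuous_const.sub continuous_id)
      have h0 : ∫ y, l1norm (w i - y) ∂(σ i)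
          = ∫ p, l1norm (w i - p.2) ∂(π.restrict (Ai i)) := by
        rw [hσ]
        rw [integral_map measurable_snd.aemeasurable hc2.aestronglyMeasurable]
      rw [h0]
      refine setIntegral_congr_fun (hAimeas i) fun p hp => ?_
      have hp1 : p.1 = w i := hp
      rw [hp1]
    have hfint : Integrable (fun p : (ι → ℝ) × (ι → ℝ) => l1norm (p.1 - p.2)) π := by
      have h1 : Integrable (fun p : (ι → ℝ) × (ι → ℝ) => l1norm p.1) π := by
        have h0 : Integrable (fun v => l1norm v) (π.map Prod.fst) := by
          rw [hfst]; exact integrable_emp hN w hl1m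
        exact (integrable_map_measure continuous_l1norm.aestronglyMeasurable
          measurable_fst.aemeasurable).1 h0
      have h2 : Integrable (fun p : (ι → ℝ) × (ι → ℝ) => l1norm p.2) π := by
        have h0 : Integrable (fun v => l1norm v) (π.map Prod.snd) := by
          rw [hsnd]; exact hPwmom
        exact (integrable_map_measure continuous_l1norm.aestronglyMeasurable
          measurable_snd.aemeasurable).1 h0
      refine (h1.add h2).mono (continuous_l1norm.comp
        (continuous_fst.sub continuous_snd)).aestronglyMeasurable
        (Filter.Eventually.of_forall fun p => ?_)
      rw [Real.norm_eq_abs, abs_of_nonneg (l1norm_nonneg _)]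
      exact le_trans (l1norm_sub_le _ _) (le_abs_self _)
    have hregroup : ∑ i, ((cnt (w i) : ℝ≥0∞))⁻¹.toReal * ∫ p in Ai i, l1norm (p.1 - p.2) ∂π
        ≤ ∫ p, l1norm (p.1 - p.2) ∂π := by
      have himg : ∀ a ∈ Finset.univ.image w, (cnt a : ℝ) ≠ 0 := by
        intro a ha
        obtain ⟨i, -, rfl⟩ := Finset.mem_image.1 ha
        exact_mod_cast (hcntpos i).ne'
      have hcomp : ∑ i, ((cnt (w i) : ℝ≥0∞))⁻¹.toReal * ∫ p in Ai i, l1norm (p.1 - p.2) ∂π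
          = ∑ a ∈ Finset.univ.image w, (Finset.univ.filter fun j => w j = a).card •
            (((cnt a : ℝ≥0∞))⁻¹.toReal *
              ∫ p in {p : (ι → ℝ) × (ι → ℝ) | p.1 = a}, l1norm (p.1 - p.2) ∂π) :=
        Finset.sum_comp (fun a => ((cnt a : ℝ≥0∞))⁻¹.toReal *
          ∫ p in {p : (ι → ℝ) × (ι → ℝ) | p.1 = a}, l1norm (p.1 - p.2) ∂π) w
      rw [hcomp]
      have hsimp : ∀ a ∈ Finset.univ.image w,
          (Finset.univ.filter fun j => w j = a).card •
            (((cnt a : ℝ≥0∞))⁻¹.toReal *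
              ∫ p in {p : (ι → ℝ) × (ι → ℝ) | p.1 = a}, l1norm (p.1 - p.2) ∂π)
          = ∫ p in {p : (ι → ℝ) × (ι → ℝ) | p.1 = a}, l1norm (p.1 - p.2) ∂π := by
        intro a ha
        rw [nsmul_eq_mul, ENNReal.toReal_inv, ENNReal.toReal_natCast]
        have hrfl : ((Finset.univ.filter fun j => w j = a).card : ℝ) = (cnt a : ℝ) := rfl
        rw [hrfl, ← mul_assoc, mul_inv_cancel₀ (himg a ha), one_mul]
      rw [Finset.sum_congr rfl hsimp]
      have hbi : ∫ p in ⋃ a ∈ Finset.univ.image w, {p : (ι → ℝ) × (ι → ℝ) | p.1 = a},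
            l1norm (p.1 - p.2) ∂π
          = ∑ a ∈ Finset.univ.image w,
            ∫ p in {p : (ι → ℝ) × (ι → ℝ) | p.1 = a}, l1norm (p.1 - p.2) ∂π := by
        refine integral_biUnion_finset (Finset.univ.image w)
          (fun a _ => measurable_fst (measurableSet_singleton a))
          ?_ (fun a _ => hfint.integrableOn)
        intro a ha a' ha' haa'
        simp only [Function.onFun]
        refine Set.disjoint_left.2 fun p hp hp' => ?_
        exact haa' (hp.symm.trans hp')
      rw [← hbi]
      exact setIntegral_le_integral hfint (Filter.Eventually.of_forall fun p => l1norm_nonneg _)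
    -- membership and final chain
    have hwle : wass (emp b) (Pw.map gm) ≤ ∫ p, l1norm (p.1 - p.2) ∂pt := by
      refine csInf_le ⟨0, ?_⟩ ⟨pt, hptprob, hptfst, hptsnd, rfl⟩
      rintro t ⟨π', hπ', -, -, rfl⟩
      exact integral_nonneg fun p => l1norm_nonneg _
    refine le_trans hwle ?_
    rw [hIpt]
    have hstep1 : ∑ i, ((cnt (w i) : ℝ≥0∞))⁻¹.toReal * ∫ y, l1norm (b i - G *ᵥ y) ∂(σ i)
        ≤ ∑ i, ((cnt (w i) : ℝ≥0∞))⁻¹.toReal *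
          (e i * ((N : ℝ)⁻¹ * cnt (w i)) + c * ∫ p in Ai i, l1norm (p.1 - p.2) ∂π) := by
      refine Finset.sum_le_sum fun i _ => ?_
      refine mul_le_mul_of_nonneg_left ?_ ENNReal.toReal_nonneg
      rw [← hIi i]
      exact hIb i
    refine le_trans hstep1 ?_
    have hsplit : ∑ i, ((cnt (w i) : ℝ≥0∞))⁻¹.toReal *
          (e i * ((N : ℝ)⁻¹ * cnt (w i)) + c * ∫ p in Ai i, l1norm (p.1 - p.2) ∂π)
        = (N : ℝ)⁻¹ * ∑ i, e i
          + c * ∑ i, ((cnt (w i) : ℝ≥0∞))⁻¹.toReal * ∫ p in Ai i, l1norm (p.1 - p.2) ∂π := by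
      rw [Finset.mul_sum, Finset.mul_sum, ← Finset.sum_add_distrib]
      refine Finset.sum_congr rfl fun i _ => ?_
      rw [ENNReal.toReal_inv, ENNReal.toReal_natCast]
      have hne : ((cnt (w i) : ℝ)) ≠ 0 := by exact_mod_cast (hcntpos i).ne'
      rw [mul_add]
      congr 1
      · calc ((cnt (w i) : ℝ))⁻¹ * (e i * ((N : ℝ)⁻¹ * cnt (w i)))
            = (((cnt (w i) : ℝ))⁻¹ * cnt (w i)) * ((N : ℝ)⁻¹ * e i) := by ring
          _ = (N : ℝ)⁻¹ * e i := by rw [inv_mul_cancel₀ hne, one_mul]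
      · ring
    rw [hsplit]
    exact add_le_add_right (mul_le_mul_of_nonneg_left hregroup hc) _
  -- conclusion from key
  rcases hc.eq_or_lt with hc0 | hcpos
  · obtain ⟨r₀, hr₀⟩ := hSne
    have h := key r₀ hr₀
    rw [← hc0] at h ⊢
    simpa using h
  · have h1 : (wass (emp b) (Pw.map gm) - (N:ℝ)⁻¹ * ∑ i, e i) / c ≤ sInf S := by
      refine le_csInf hSne fun r hr => ?_
      rw [div_le_iff₀ hcpos]
      have := key r hr
      linarith
    rw [hww]
    have h2 := (div_le_iff₀ hcpos).mp h1
    linarith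

end Main

section B
variable {n m T : ℕ}
  (Ahat A : Matrix (Fin n) (Fin n) ℝ) (Bhat B : Matrix (Fin n) (Fin m) ℝ)
  (Φx : Matrix (Fin (T+1) × Fin n) (Fin (T+1) × Fin n) ℝ)
  (Φu : Matrix (Fin (T+1) × Fin m) (Fin (T+1) × Fin n) ℝ)
  (Φ : Matrix ((Fin (T+1) × Fin n) ⊕ (Fin (T+1) × Fin m)) (Fin (T+1) × Fin n) ℝ)
  (ΔM : Matrix (Fin (T+1) × Fin n) ((Fin (T+1) × Fin n) ⊕ (Fin (T+1) × Fin m)) ℝ)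

/-- degree of an index -/
def deg : (Fin (T+1) × Fin n) ⊕ (Fin (T+1) × Fin m) → ℕ :=
  Sum.elim (fun p => (p.1 : ℕ)) (fun p => (p.1 : ℕ))

lemma blkdiag_sub {n m : ℕ} (T : ℕ) (M M' : Matrix (Fin n) (Fin m) ℝ) :
    blkdiag T (M - M') = blkdiag T M - blkdiag T M' := by
  funext p q
  simp only [blkdiag, Matrix.sub_apply]
  split_ifs <;> simp

lemma strict_lower (hx : BlockLT Φx) (hu : BlockLT Φu)
    (hΦ : Φ = Matrix.fromRows Φx Φu)
    (hΔM : ΔM = Matrix.fromCols (blkdiag T (Ahat - A)) (blkdiag T (Bhat - B))) :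
    ∀ p q, deg p ≤ deg q → (Φ * dshift T n * ΔM) p q = 0 := by
  intro p q hpq
  rw [Matrix.mul_apply]
  refine Finset.sum_eq_zero fun s _ => ?_
  by_cases hsq : (s.1 : ℕ) = deg q
  · rw [Matrix.mul_apply]
    rw [Finset.sum_eq_zero, zero_mul]
    intro r _
    by_cases hrs : (r.1 : ℕ) = (s.1 : ℕ) + 1 ∧ r.2 = s.2
    · have hΦ0 : Φ p r = 0 := by
        have hlt : deg p < (r.1 : ℕ) := by omega
        rcases p with p | p
        · rw [hΦ, Matrix.fromRows_apply_inl]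
          exact hx p r (by simpa [deg] using hlt)
        · rw [hΦ, Matrix.fromRows_apply_inr]
          exact hu p r (by simpa [deg] using hlt)
      rw [hΦ0, zero_mul]
    · have : dshift T n r s = 0 := by rw [dshift, if_neg hrs]
      rw [this, mul_zero]
  · have : ΔM s q = 0 := by
      rcases q with q | q
      · rw [hΔM, Matrix.fromCols_apply_inl, blkdiag, if_neg]
        intro h; exact hsq (by simp [deg, h])
      · rw [hΔM, Matrix.fromCols_apply_inr, blkdiag, if_neg]
        intro h; exact hsq (by simp [deg, h])
    rw [this, mul_zero]

lemma pow_zero_deg {M : Matrix ((Fin (T+1) × Fin n) ⊕ (Fin (T+1) × Fin m))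
      ((Fin (T+1) × Fin n) ⊕ (Fin (T+1) × Fin m)) ℝ}
    (hM : ∀ p q, deg p ≤ deg q → M p q = 0) :
    ∀ (k : ℕ) p q, deg p < deg q + k → (M ^ k) p q = 0 := by
  intro k
  induction k with
  | zero =>
    intro p q h
    rw [pow_zero]
    exact Matrix.one_apply_ne (fun he => by subst he; omega)
  | succ k ih =>
    intro p q h
    rw [pow_succ, Matrix.mul_apply]
    refine Finset.sum_eq_zero fun r _ => ?_
    by_cases hr : deg q < deg r
    · rw [ih p r (by omega), zero_mul]
    · rw [hM r q (by omega), mul_zero]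

lemma deg_le (p : (Fin (T+1) × Fin n) ⊕ (Fin (T+1) × Fin m)) : deg p ≤ T := by
  rcases p with p | p <;> exact Nat.lt_succ_iff.mp p.1.isLt

lemma isUnit_one_add (hx : BlockLT Φx) (hu : BlockLT Φu)
    (hΦ : Φ = Matrix.fromRows Φx Φu)
    (hΔM : ΔM = Matrix.fromCols (blkdiag T (Ahat - A)) (blkdiag T (Bhat - B))) :
    IsUnit (1 + Φ * dshift T n * ΔM) := by
  have hnil : IsNilpotent (Φ * dshift T n * ΔM) := by
    refine ⟨T + 1, ?_⟩
    ext p q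
    rw [pow_zero_deg (strict_lower Ahat A Bhat B Φx Φu Φ ΔM hx hu hΦ hΔM) (T+1) p q
      (by have := deg_le p; omega)]
    simp
  have : (1 : Matrix _ _ ℝ) + Φ * dshift T n * ΔM = 1 - (-(Φ * dshift T n * ΔM)) := by rw [sub_neg_eq_add]
  rw [this]
  exact IsNilpotent.isUnit_one_sub hnil.neg
end B


lemma key_identity {n m T : ℕ}
    (Φ : Matrix ((Fin (T+1) × Fin n) ⊕ (Fin (T+1) × Fin m)) (Fin (T+1) × Fin n) ℝ)
    (ΔM : Matrix (Fin (T+1) × Fin n) ((Fin (T+1) × Fin n) ⊕ (Fin (T+1) × Fin m)) ℝ)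
    (RΦ : Matrix ((Fin (T+1) × Fin n) ⊕ (Fin (T+1) × Fin m))
                 ((Fin (T+1) × Fin n) ⊕ (Fin (T+1) × Fin m)) ℝ)
    (hRmul : RΦ * (1 + Φ * dshift T n * ΔM) = 1)
    (wv whatv : (Fin (T+1) × Fin n) → ℝ)
    (s : ((Fin (T+1) × Fin n) ⊕ (Fin (T+1) × Fin m)) → ℝ)
    (hwdiff : wv = whatv + dshift T n *ᵥ (ΔM *ᵥ s)) :
    Φ *ᵥ whatv = (RΦ * Φ) *ᵥ wv + (RΦ * Φ * dshift T n * ΔM) *ᵥ (Φ *ᵥ whatv - s) := by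
  have h1 : RΦ + RΦ * (Φ * dshift T n * ΔM) = 1 := by
    rw [← hRmul, mul_add, mul_one]
  have h3 : RΦ * (Φ * dshift T n * ΔM) = RΦ * Φ * dshift T n * ΔM := by
    rw [← Matrix.mul_assoc, ← Matrix.mul_assoc]
  have hmat : RΦ * Φ + RΦ * Φ * dshift T n * ΔM * Φ = Φ := by
    calc RΦ * Φ + RΦ * Φ * dshift T n * ΔM * Φ
        = (RΦ + RΦ * (Φ * dshift T n * ΔM)) * Φ := by rw [Matrix.add_mul, h3]
      _ = Φ := by rw [h1, Matrix.one_mul]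
  calc Φ *ᵥ whatv = (RΦ * Φ + RΦ * Φ * dshift T n * ΔM * Φ) *ᵥ whatv := by rw [hmat]
    _ = (RΦ * Φ) *ᵥ whatv + (RΦ * Φ * dshift T n * ΔM) *ᵥ (Φ *ᵥ whatv) := by
        rw [Matrix.add_mulVec, ← Matrix.mulVec_mulVec whatv (RΦ * Φ * dshift T n * ΔM) Φ]
    _ = (RΦ * Φ) *ᵥ wv + (RΦ * Φ * dshift T n * ΔM) *ᵥ (Φ *ᵥ whatv - s) := by
        rw [hwdiff, Matrix.mulVec_add, Matrix.mulVec_sub]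
        have h2 : (RΦ * Φ) *ᵥ (dshift T n *ᵥ (ΔM *ᵥ s)) = (RΦ * Φ * dshift T n * ΔM) *ᵥ s := by
          rw [Matrix.mulVec_mulVec, Matrix.mulVec_mulVec]
        rw [h2]
        abel


/-- **Theorem 1, distribution shift.** The Wasserstein distance between the
empirical predictive distribution and the true closed-loop distribution is bounded by a
model-mismatch term plus a disturbance-distribution-uncertainty term. -/
theorem stmt9 {n m T N : ℕ} (hn : 0 < n) (hm : 0 < m) (hT : 0 < T) (hN : 0 < N)
    (Ahat A : Matrix (Fin n) (Fin n) ℝ) (Bhat B : Matrix (Fin n) (Fin m) ℝ)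
    (Φx : Matrix (Fin (T+1) × Fin n) (Fin (T+1) × Fin n) ℝ)
    (Φu : Matrix (Fin (T+1) × Fin m) (Fin (T+1) × Fin n) ℝ)
    (hx : BlockLT Φx) (hu : BlockLT Φu)
    (hSLS : (1 - dshift T n * blkdiag T Ahat) * Φx - dshift T n * blkdiag T Bhat * Φu = 1)
    (Φ : Matrix ((Fin (T+1) × Fin n) ⊕ (Fin (T+1) × Fin m)) (Fin (T+1) × Fin n) ℝ)
    (hΦ : Φ = Matrix.fromRows Φx Φu)
    (ΔM : Matrix (Fin (T+1) × Fin n) ((Fin (T+1) × Fin n) ⊕ (Fin (T+1) × Fin m)) ℝ)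
    (hΔM : ΔM = Matrix.fromCols (blkdiag T (Ahat - A)) (blkdiag T (Bhat - B)))
    (RΦ : Matrix ((Fin (T+1) × Fin n) ⊕ (Fin (T+1) × Fin m))
                 ((Fin (T+1) × Fin n) ⊕ (Fin (T+1) × Fin m)) ℝ)
    (hR : RΦ = (1 + Φ * dshift T n * ΔM)⁻¹)
    (x0 : Fin n → ℝ)
    (Pw : Measure ((Fin (T+1) × Fin n) → ℝ)) [IsProbabilityMeasure Pw]
    (hPwmom : Integrable (fun v => l1norm v) Pw)
    (hPwsupp : ∀ᵐ v ∂Pw, ∀ j, v (0, j) = x0 j)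
    (x : Fin N → (Fin (T+1) × Fin n) → ℝ) (u : Fin N → (Fin (T+1) × Fin m) → ℝ)
    (w what : Fin N → (Fin (T+1) × Fin n) → ℝ)
    (hw : ∀ i, w i = x i - (dshift T n * blkdiag T A) *ᵥ x i
        - (dshift T n * blkdiag T B) *ᵥ u i)
    (hwhat : ∀ i, what i = x i - (dshift T n * blkdiag T Ahat) *ᵥ x i
        - (dshift T n * blkdiag T Bhat) *ᵥ u i)
    (hw0 : ∀ i j, w i (0, j) = x0 j) :
    wass (emp (fun i => Φ *ᵥ what i)) (Pw.map (fun v => (RΦ * Φ) *ᵥ v))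
      ≤ (N : ℝ)⁻¹ * ∑ i, l1norm
            ((RΦ * Φ * dshift T n * ΔM) *ᵥ (Φ *ᵥ what i - Sum.elim (x i) (u i)))
        + matL1 (RΦ * Φ * dshift T n) * wass (emp w) Pw := by
  classical
  haveI hne1 : Nonempty (Fin (T+1) × Fin n) := ⟨(0, ⟨0, hn⟩)⟩
  -- invertibility
  have hUnit : IsUnit (1 + Φ * dshift T n * ΔM) :=
    isUnit_one_add Ahat A Bhat B Φx Φu Φ ΔM hx hu hΦ hΔM
  have hRmul : RΦ * (1 + Φ * dshift T n * ΔM) = 1 := by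
    rw [hR]
    exact Matrix.nonsing_inv_mul _ ((Matrix.isUnit_iff_isUnit_det _).mp hUnit)
  -- disturbance relation
  have hwdiff : ∀ i, w i = what i + dshift T n *ᵥ (ΔM *ᵥ Sum.elim (x i) (u i)) := by
    intro i
    have h1 : ΔM *ᵥ Sum.elim (x i) (u i)
        = (blkdiag T Ahat - blkdiag T A) *ᵥ x i + (blkdiag T Bhat - blkdiag T B) *ᵥ u i := by
      rw [hΔM, Matrix.fromCols_mulVec_sumElim, blkdiag_sub, blkdiag_sub]
    rw [h1, hw i, hwhat i]
    simp only [Matrix.mulVec_add, Matrix.mulVec_sub, Matrix.sub_mulVec, Matrix.mulVec_mulVec, Matrix.mul_sub]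
    abel
  have hkey_id : ∀ i, Φ *ᵥ what i = (RΦ * Φ) *ᵥ w i
      + (RΦ * Φ * dshift T n * ΔM) *ᵥ (Φ *ᵥ what i - Sum.elim (x i) (u i)) :=
    fun i => key_identity Φ ΔM RΦ hRmul (w i) (what i) (Sum.elim (x i) (u i)) (hwdiff i)
  -- a.e. pointwise bound
  have hkeyae : ∀ i, ∀ᵐ y ∂Pw,
      l1norm ((fun i => Φ *ᵥ what i) i - (RΦ * Φ) *ᵥ y)
        ≤ (fun i => l1norm ((RΦ * Φ * dshift T n * ΔM) *ᵥ
            (Φ *ᵥ what i - Sum.elim (x i) (u i)))) i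
          + matL1 (RΦ * Φ * dshift T n) * l1norm (w i - y) := by
    intro i
    filter_upwards [hPwsupp] with y hy
    have hdiff : Φ *ᵥ what i - (RΦ * Φ) *ᵥ y
        = (RΦ * Φ * dshift T n * ΔM) *ᵥ (Φ *ᵥ what i - Sum.elim (x i) (u i))
          + (RΦ * Φ) *ᵥ (w i - y) := by
      conv_lhs => rw [hkey_id i]
      simp only [Matrix.mulVec_sub]
      abel
    show l1norm (Φ *ᵥ what i - (RΦ * Φ) *ᵥ y) ≤ _
    rw [hdiff]
    refine le_trans (l1norm_add_le _ _) (add_le_add_right ?_ _)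
    refine l1norm_mulVec_dshift_le (RΦ * Φ) (w i - y) fun j => ?_
    show w i (0, j) - y (0, j) = 0
    rw [hw0 i j, hy j, sub_self]
  haveI : Nonempty (Fin n) := ⟨⟨0, hn⟩⟩
  exact wass_bound (RΦ * Φ) hN Pw hPwmom w (fun i => Φ *ᵥ what i)
    (fun i => l1norm ((RΦ * Φ * dshift T n * ΔM) *ᵥ (Φ *ᵥ what i - Sum.elim (x i) (u i))))
    (matL1 (RΦ * Φ * dshift T n)) (matL1_nonneg _) hkeyae
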